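/- Let k be a field and let the graded algebra A with triangular decomposition A = B̄ ⊗ H ⊗ B (as above) act on standard modules Δ(E) = A ⊗_{BH} E. Suppose ∂ = ∂' − ∂₀ with ∂₀ central in H acting on a simple H-module E by the scalar c_E, and ∂' ∈ B̄ ⊗ H ⊗ B_{<0} annihilating lowest weight vectors. If Ext¹_{category O}(Δ(E), Δ(F)) ≠ 0 for simple H-modules E, F, then c_F − c_E is a positive integer. -/

import Mathlib

open CategoryTheory

set_option maxHeartbeats 1000000
set_option synthInstance.maxHeartbeats 400000

universe u

section AuxLemmas

variable {k : Type u} [Field k]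

/-- In a semisimple ring, a central element `n` satisfies `n = b * (n * n)` for some `b`. -/
lemma aux_vonNeumann_central {R : Type u} [Ring R] [IsSemisimpleRing R]
    (n : R) (hn : ∀ m : R, n * m = m * n) : ∃ b : R, n = b * (n * n) := by
  obtain ⟨C, hC⟩ := exists_isCompl (Submodule.span R {n} : Submodule R R)
  have h1 : (1 : R) ∈ (Submodule.span R {n} : Submodule R R) ⊔ C := by
    rw [hC.sup_eq_top]; trivial
  obtain ⟨i, hi, c, hc, hic⟩ := Submodule.mem_sup.mp h1
  obtain ⟨b, hb⟩ := Submodule.mem_span_singleton.mp hi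
  have key : n * i + n * c = n := by
    have := congrArg (n * ·) hic
    simpa [mul_add] using this
  have hnc : n * c ∈ (Submodule.span R {n} : Submodule R R) ⊓ C := by
    constructor
    · have h2 : n * c = n - n * i := eq_sub_iff_add_eq.mpr (by rw [add_comm]; exact key)
      rw [h2]
      exact sub_mem (Submodule.mem_span_singleton_self n)
        (by simpa [smul_eq_mul] using Submodule.smul_mem _ n hi)
    · simpa [smul_eq_mul] using C.smul_mem n hc
  rw [hC.inf_eq_bot] at hnc
  have hnc0 : n * c = 0 := hnc
  have hni : n = n * i := by
    have h3 := key
    rw [hnc0, add_zero] at h3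
    exact h3.symm
  refine ⟨b, ?_⟩
  rw [← hb, smul_eq_mul] at hni
  calc n = n * (b * n) := hni
    _ = b * n * n := by rw [← mul_assoc, hn b]
    _ = b * (n * n) := by rw [mul_assoc]

variable {V : Type u} [AddCommGroup V] [Module k V]

private lemma aux_op_comm (T : Module.End k V) (a b : k) (u : V) :
    (T - a • 1) ((T - b • 1) u) = (T - b • 1) ((T - a • 1) u) := by
  simp only [LinearMap.sub_apply, LinearMap.smul_apply, Module.End.one_apply, map_sub, map_smul,
    smul_sub]
  rw [smul_comm a b]
  abel

lemma aux_stab (T : Module.End k V) (lam : ℕ → k) (s : Finset ℕ) (ν : k) :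
    ∀ u ∈ (⨆ i ∈ s, LinearMap.ker (T - lam i • (1 : Module.End k V))),
      (T - ν • 1) u ∈ (⨆ i ∈ s, LinearMap.ker (T - lam i • (1 : Module.End k V))) := by
  classical
  induction s using Finset.induction_on with
  | empty => intro u hu; simp only [Finset.notMem_empty, iSup_false, iSup_bot,
      Submodule.mem_bot] at hu; simp [hu]
  | @insert j s hj ih =>
    intro u hu
    rw [Finset.iSup_insert] at hu ⊢
    obtain ⟨a, ha, z, hz, rfl⟩ := Submodule.mem_sup.mp hu
    have hTa : (T - ν • 1) a ∈ LinearMap.ker (T - lam j • (1 : Module.End k V)) := by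
      have ha' : T a = lam j • a := by
        have := (LinearMap.mem_ker).mp ha
        simp only [LinearMap.sub_apply, LinearMap.smul_apply, Module.End.one_apply,
          sub_eq_zero] at this
        exact this
      rw [LinearMap.mem_ker]
      simp only [LinearMap.sub_apply, LinearMap.smul_apply, Module.End.one_apply, map_sub,
        map_smul, ha']
      simp
    rw [map_add]
    exact Submodule.add_mem _ (Submodule.mem_sup_left hTa) (Submodule.mem_sup_right (ih z hz))

lemma aux_eig (T : Module.End k V) (lam : ℕ → k) (μ : k) (hμ : ∀ i, μ ≠ lam i) (s : Finset ℕ) :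
    ∀ u ∈ (⨆ i ∈ s, LinearMap.ker (T - lam i • (1 : Module.End k V))),
      (T - μ • 1) ((T - μ • 1) u) = 0 → u = 0 := by
  classical
  induction s using Finset.induction_on with
  | empty => intro u hu _; simpa using hu
  | @insert j s hj ih =>
    intro u hu h2
    rw [Finset.iSup_insert] at hu
    obtain ⟨a, ha, z, hz, rfl⟩ := Submodule.mem_sup.mp hu
    set u := a + z with hu_def
    have hu' : (T - lam j • 1) u ∈ (⨆ i ∈ s, LinearMap.ker (T - lam i • (1 : Module.End k V))) := by
      rw [hu_def, map_add]
      have : (T - lam j • (1 : Module.End k V)) a = 0 := ha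
      rw [this, zero_add]
      exact aux_stab T lam s (lam j) z hz
    have h2' : (T - μ • 1) ((T - μ • 1) ((T - lam j • 1) u)) = 0 := by
      rw [aux_op_comm T μ (lam j), aux_op_comm T μ (lam j), h2]
      simp
    have hTu : (T - lam j • 1) u = 0 := ih _ hu' h2'
    have hTu' : T u = lam j • u := by
      have := hTu
      simp only [LinearMap.sub_apply, LinearMap.smul_apply, Module.End.one_apply,
        sub_eq_zero] at this
      exact this
    have hscal : (T - μ • 1) u = (lam j - μ) • u := by
      simp [LinearMap.sub_apply, hTu', sub_smul]
    rw [hscal, map_smul, hscal, smul_smul] at h2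
    have hne : (lam j - μ) * (lam j - μ) ≠ 0 :=
      mul_ne_zero (sub_ne_zero.mpr fun h => hμ j h.symm) (sub_ne_zero.mpr fun h => hμ j h.symm)
    exact (smul_eq_zero.mp h2).resolve_left hne

variable {A : Type u} [Ring A] [Algebra k A]
variable {M : Type u} [AddCommGroup M] [Module A M]

/-- The basic "shift operator" `∂ - μ`. -/
def auxS (dd : A) (c : k) (y : M) : M := dd • y - algebraMap k A c • y

lemma aux_centr (a : A) (c : k) (y : M) :
    a • (algebraMap k A c • y) = algebraMap k A c • (a • y) := by
  rw [smul_smul, smul_smul, ← Algebra.commutes c a]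

lemma auxS_add (dd : A) (c : k) (x y : M) :
    auxS dd c (x + y) = auxS dd c x + auxS dd c y := by
  simp only [auxS, smul_add]; abel

lemma auxS_zero (dd : A) (c : k) : auxS dd c (0 : M) = 0 := by simp [auxS]

lemma aux_map_auxS {N : Type u} [AddCommGroup N] [Module A N] (φ : M →ₗ[A] N)
    (dd : A) (c : k) (y : M) : φ (auxS dd c y) = auxS dd c (φ y) := by
  simp [auxS, map_sub, map_smul]

/-- Conjugation of the shift operator by a homogeneous element. -/
lemma aux_conj2 (𝒜 : ℤ → Submodule k A) (dd : A)
    (hinner : ∀ (i : ℤ) (a : A), a ∈ 𝒜 i → dd * a - a * dd = i • a)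
    {i : ℤ} {a : A} (ha : a ∈ 𝒜 i) (μ : k) (v : M) :
    auxS dd (μ + (i : k)) (a • v) = a • auxS dd μ v := by
  have h := hinner i a ha
  have hmul : dd * a = (i : A) * a + a * dd := by
    have h2 : dd * a = i • a + a * dd := by
      rw [← h]; abel
    rw [h2, zsmul_eq_mul]
  have hca : algebraMap k A (μ + (i : k)) = algebraMap k A μ + (i : A) := by
    rw [map_add, map_intCast]
  simp only [auxS]
  rw [← mul_smul dd a v, hmul, add_smul, mul_smul, mul_smul, hca, add_smul]
  have h3 : a • (algebraMap k A μ • v) = algebraMap k A μ • (a • v) := aux_centr a μ v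
  rw [smul_sub, h3]
  have h4 : (i : A) • (a • v) = (i : A) • (a • v) := rfl
  abel


lemma aux_auxS_comm (dd a : A) (hcom : dd * a = a * dd) (c : k) (y : M) :
    auxS dd c (a • y) = a • auxS dd c y := by
  simp only [auxS, smul_sub]
  rw [← mul_smul dd a y, hcom, mul_smul, aux_centr]

end AuxLemmas

/-- Let `A = B̄ ⊗ H ⊗ B` be a graded algebra over a field `k` with a
triangular decomposition, inner grading given by `∂ = ∂' − ∂₀` with
`∂' ∈ B̄ ⊗ H ⊗ B^{>0}` and `∂₀` central in `H`, acting on simple `H`-modules `E`, `F`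
by scalars `c_E`, `c_F`.  Let `Δ(E) = A ⊗_{BH} E` and `Δ(F)` be the standard modules
(given by their universal properties).  If `Ext¹(Δ(E), Δ(F)) ≠ 0` in category `𝒪`
(i.e. there is a non-split extension `0 → Δ(F) → X → Δ(E) → 0`), then `c_F − c_E` is
a positive integer. -/
theorem ext1_delta_delta_implies_positive_integer
    (k : Type u) [Field k] (A : Type u) [Ring A] [Algebra k A]
    (𝒜 : ℤ → Submodule k A) [GradedAlgebra 𝒜]
    (dd dd' dd0 : A) (hdd0mem : dd ∈ 𝒜 0)
    (hinner : ∀ (i : ℤ) (a : A), a ∈ 𝒜 i → dd * a - a * dd = i • a)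
    (B Bb H : Subalgebra k A)
    (hBgraded : ∀ x ∈ B, ∀ i : ℤ, ((DirectSum.decompose 𝒜 x) i : A) ∈ B)
    (hBneg : ∀ x ∈ B, ∀ i : ℤ, 0 < i → ((DirectSum.decompose 𝒜 x) i : A) = 0)
    (hB0 : B.toSubmodule ⊓ 𝒜 0 = Submodule.span k {(1 : A)})
    (hBbgraded : ∀ x ∈ Bb, ∀ i : ℤ, ((DirectSum.decompose 𝒜 x) i : A) ∈ Bb)
    (hBbpos : ∀ x ∈ Bb, ∀ i : ℤ, i < 0 → ((DirectSum.decompose 𝒜 x) i : A) = 0)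
    (hBb0 : Bb.toSubmodule ⊓ 𝒜 0 = Submodule.span k {(1 : A)})
    (hH0 : H.toSubmodule ≤ 𝒜 0)
    [FiniteDimensional k ↥H] [IsSemisimpleRing ↥H]
    (hBbH : Function.Injective ⇑(Submodule.mulMap Bb.toSubmodule H.toSubmodule))
    (htri : Function.Bijective
      ⇑(Submodule.mulMap (Bb.toSubmodule * H.toSubmodule) B.toSubmodule))
    (hBH : Function.Injective ⇑(Submodule.mulMap B.toSubmodule H.toSubmodule))
    (hcommBH : B.toSubmodule * H.toSubmodule = H.toSubmodule * B.toSubmodule)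
    (hcommBbH : Bb.toSubmodule * H.toSubmodule = H.toSubmodule * Bb.toSubmodule)
    -- ∂ = ∂' − ∂₀, with ∂' ∈ B̄ ⊗ H ⊗ B^{>0} and ∂₀ ∈ Z(H)
    (hddsplit : dd = dd' - dd0)
    (hdd' : dd' ∈ Bb.toSubmodule * H.toSubmodule *
      (B.toSubmodule ⊓ ⨆ i : {j : ℤ // j < 0}, 𝒜 (i : ℤ)))
    (hdd0H : dd0 ∈ H)
    (hdd0central : ∀ h ∈ H, dd0 * h = h * dd0)
    -- the subalgebra `BH` and its augmentation `π : BH → H`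
    (SBH : Subalgebra k A) (hSBH : SBH.toSubmodule = B.toSubmodule * H.toSubmodule)
    (π : ↥SBH →ₐ[k] ↥H) (hHle : H ≤ SBH)
    (hπH : ∀ (x : A) (hx : x ∈ H), ((π ⟨x, hHle hx⟩ : ↥H) : A) = x)
    (hBle : B ≤ SBH)
    (hπB : ∀ (x : A) (hx : x ∈ B), ((DirectSum.decompose 𝒜 x) 0 : A) = 0 →
      π ⟨x, hBle hx⟩ = 0)
    -- simple `H`-modules `E`, `F` on which `∂₀` acts by scalars `c_E`, `c_F`
    (E : Type u) [AddCommGroup E] [Module ↥H E] [Module k E] [IsScalarTower k ↥H E]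
    (F : Type u) [AddCommGroup F] [Module ↥H F] [Module k F] [IsScalarTower k ↥H F]
    (hEsimple : IsSimpleModule ↥H E) (hFsimple : IsSimpleModule ↥H F)
    (cE cF : k)
    (hcE : ∀ e : E, (⟨dd0, hdd0H⟩ : ↥H) • e = cE • e)
    (hcF : ∀ f : F, (⟨dd0, hdd0H⟩ : ↥H) • f = cF • f)
    -- the standard modules Δ(E) and Δ(F), via their universal properties
    (DE : Type u) [AddCommGroup DE] [Module A DE]
    (jE : E →+ DE)
    (hjE : ∀ (s : ↥SBH) (e : E), jE (π s • e) = (s : A) • jE e)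
    (hDEuniv : ∀ (N : ModuleCat.{u} A) (g : E →+ N),
      (∀ (s : ↥SBH) (e : E), g (π s • e) = (s : A) • g e) →
      ∃! G : DE →ₗ[A] N, ∀ e, G (jE e) = g e)
    (DF : Type u) [AddCommGroup DF] [Module A DF]
    (jF : F →+ DF)
    (hjF : ∀ (s : ↥SBH) (f : F), jF (π s • f) = (s : A) • jF f)
    (hDFuniv : ∀ (N : ModuleCat.{u} A) (g : F →+ N),
      (∀ (s : ↥SBH) (f : F), g (π s • f) = (s : A) • g f) →
      ∃! G : DF →ₗ[A] N, ∀ f, G (jF f) = g f)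
    -- a non-split extension `0 → Δ(F) → X → Δ(E) → 0` (i.e. `Ext¹(Δ(E), Δ(F)) ≠ 0`)
    (X : Type u) [AddCommGroup X] [Module A X]
    (f : DF →ₗ[A] X) (g : X →ₗ[A] DE)
    (hf : Function.Injective f) (hg : Function.Surjective g)
    (hfg : LinearMap.range f = LinearMap.ker g)
    (hnonsplit : ¬ ∃ s : DE →ₗ[A] X, g ∘ₗ s = LinearMap.id) :
    ∃ n : ℕ, 0 < n ∧ cF - cE = (n : k) := by
  classical
  by_cases hmain : ∃ n : ℕ, 0 < n ∧ cF - cE = (n : k)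
  · exact hmain
  exfalso
  apply hnonsplit
  push_neg at hmain
  -- ### Stage 1 : basic graded facts
  have hcompNN : ∀ x ∈ (⨆ i : {j : ℤ // j < 0}, 𝒜 (i : ℤ)), ∀ m : ℤ, 0 ≤ m →
      ((DirectSum.decompose 𝒜 x) m : A) = 0 := by
    intro x hx m hm
    refine Submodule.iSup_induction (motive := fun y => ((DirectSum.decompose 𝒜 y) m : A) = 0)
      _ hx ?_ ?_ ?_
    · rintro ⟨i, hi⟩ a ha
      exact DirectSum.decompose_of_mem_ne 𝒜 ha (by omega : (i : ℤ) ≠ m)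
    · simp
    · intro a b ha hb
      rw [DirectSum.decompose_add, DirectSum.add_apply, Submodule.coe_add, ha, hb, add_zero]
  have hBkillF : ∀ b ∈ B, ((DirectSum.decompose 𝒜 b) 0 : A) = 0 → ∀ f0 : F,
      b • jF f0 = 0 := by
    intro b hb h0 f0
    have h1 := hjF ⟨b, hBle hb⟩ f0
    rw [hπB b hb h0, zero_smul, map_zero] at h1
    exact h1.symm
  have hBkillE : ∀ b ∈ B, ((DirectSum.decompose 𝒜 b) 0 : A) = 0 → ∀ e : E,
      b • jE e = 0 := by
    intro b hb h0 e
    have h1 := hjE ⟨b, hBle hb⟩ e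
    rw [hπB b hb h0, zero_smul, map_zero] at h1
    exact h1.symm
  have hdd'F : ∀ f0 : F, dd' • jF f0 = 0 := by
    intro f0
    refine Submodule.mul_induction_on hdd' (fun m hm n hn => ?_)
      (fun x y hx hy => by rw [add_smul, hx, hy, add_zero])
    rw [mul_smul, hBkillF n hn.1 (hcompNN n hn.2 0 le_rfl) f0, smul_zero]
  have hdd'E : ∀ e : E, dd' • jE e = 0 := by
    intro e
    refine Submodule.mul_induction_on hdd' (fun m hm n hn => ?_)
      (fun x y hx hy => by rw [add_smul, hx, hy, add_zero])
    rw [mul_smul, hBkillE n hn.1 (hcompNN n hn.2 0 le_rfl) e, smul_zero]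
  have hlowF : ∀ f0 : F, dd • jF f0 = algebraMap k A (-cF) • jF f0 := by
    intro f0
    have hd0 : dd0 • jF f0 = algebraMap k A cF • jF f0 := by
      have h1 := hjF ⟨dd0, hHle hdd0H⟩ f0
      have h2 : π ⟨dd0, hHle hdd0H⟩ = ⟨dd0, hdd0H⟩ := Subtype.ext (hπH dd0 hdd0H)
      rw [h2, hcF] at h1
      have h3 := hjF (algebraMap k ↥SBH cF) f0
      rw [AlgHom.commutes, algebraMap_smul, Subalgebra.coe_algebraMap] at h3
      rw [← h1, h3]
    calc dd • jF f0 = (dd' - dd0) • jF f0 := by rw [← hddsplit]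
      _ = dd' • jF f0 - dd0 • jF f0 := sub_smul _ _ _
      _ = -(algebraMap k A cF • jF f0) := by rw [hdd'F f0, hd0, zero_sub]
      _ = algebraMap k A (-cF) • jF f0 := by rw [map_neg, neg_smul]
  have hlowE : ∀ e : E, dd • jE e = algebraMap k A (-cE) • jE e := by
    intro e
    have hd0 : dd0 • jE e = algebraMap k A cE • jE e := by
      have h1 := hjE ⟨dd0, hHle hdd0H⟩ e
      have h2 : π ⟨dd0, hHle hdd0H⟩ = ⟨dd0, hdd0H⟩ := Subtype.ext (hπH dd0 hdd0H)
      rw [h2, hcE] at h1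
      have h3 := hjE (algebraMap k ↥SBH cE) e
      rw [AlgHom.commutes, algebraMap_smul, Subalgebra.coe_algebraMap] at h3
      rw [← h1, h3]
    calc dd • jE e = (dd' - dd0) • jE e := by rw [← hddsplit]
      _ = dd' • jE e - dd0 • jE e := sub_smul _ _ _
      _ = -(algebraMap k A cE • jE e) := by rw [hdd'E e, hd0, zero_sub]
      _ = algebraMap k A (-cE) • jE e := by rw [map_neg, neg_smul]
  -- ### Stage 2 : structure of Δ(F)
  letI : Module k DF := Module.compHom DF (algebraMap k A)
  have hsmulDF : ∀ (c : k) (y : DF), c • y = algebraMap k A c • y := fun _ _ => rfl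
  let TF : Module.End k DF :=
    { toFun := fun y => dd • y
      map_add' := fun x y => smul_add dd x y
      map_smul' := fun c y => by
        show dd • (algebraMap k A c • y) = algebraMap k A c • (dd • y)
        exact aux_centr dd c y }
  let lamF : ℕ → k := fun i => (i : k) - cF
  have hEig_iff : ∀ (i : ℕ) (v : DF),
      v ∈ LinearMap.ker (TF - lamF i • (1 : Module.End k DF)) ↔ auxS dd (lamF i) v = 0 := by
    intro i v
    rw [LinearMap.mem_ker]
    constructor
    · intro hv
      have : TF v - lamF i • v = 0 := hv
      exact this
    · intro hv
      show TF v - lamF i • v = 0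
      exact hv
  let W : ℕ → Submodule k DF :=
    fun i => Submodule.span k {x | ∃ a ∈ 𝒜 (i : ℤ), ∃ f0 : F, x = a • jF f0}
  have hW_le : ∀ i : ℕ, W i ≤ LinearMap.ker (TF - lamF i • (1 : Module.End k DF)) := by
    intro i
    refine Submodule.span_le.mpr ?_
    rintro x ⟨a, ha, f0, rfl⟩
    rw [SetLike.mem_coe, hEig_iff]
    have h1 : auxS dd (-cF + ((i : ℤ) : k)) (a • jF f0) = a • auxS dd (-cF) (jF f0) :=
      aux_conj2 𝒜 dd hinner ha (-cF) (jF f0)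
    have h2 : auxS dd (-cF) (jF f0) = 0 := by
      simp [auxS, hlowF f0]
    have h3 : lamF i = -cF + ((i : ℤ) : k) := by push_cast; ring
    rw [h3, h1, h2, smul_zero]
  have hABtop : (Bb.toSubmodule * H.toSubmodule) * B.toSubmodule = ⊤ := by
    have h := LinearMap.range_eq_top.mpr htri.2
    rw [Submodule.mulMap_range] at h
    exact h
  have hBb_W : ∀ bb ∈ Bb, ∀ f2 : F, bb • jF f2 ∈ ⨆ i, W i := by
    intro bb hbb f2
    have hdec := DirectSum.sum_support_decompose 𝒜 bb
    rw [← hdec, Finset.sum_smul]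
    refine Submodule.sum_mem _ fun j hj => ?_
    by_cases hjneg : j < 0
    · rw [hBbpos bb hbb j hjneg, zero_smul]; exact zero_mem _
    · push_neg at hjneg
      refine Submodule.mem_iSup_of_mem j.toNat (Submodule.subset_span ?_)
      exact ⟨((DirectSum.decompose 𝒜 bb) j : A),
        by rw [Int.toNat_of_nonneg hjneg]; exact SetLike.coe_mem _, f2, rfl⟩
  have hBbH_W : ∀ m ∈ Bb.toSubmodule * H.toSubmodule, ∀ f1 : F, m • jF f1 ∈ ⨆ i, W i := by
    intro m hm
    refine Submodule.mul_induction_on hm (fun bb hbb η hη => ?_)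
      (fun x y hx hy f1 => by rw [add_smul]; exact Submodule.add_mem _ (hx f1) (hy f1))
    intro f1
    rw [mul_smul, ← hjF ⟨η, hHle hη⟩ f1]
    exact hBb_W bb hbb _
  have hW_A : ∀ c : A, ∀ f0 : F, c • jF f0 ∈ ⨆ i, W i := by
    have key : ∀ c ∈ (Bb.toSubmodule * H.toSubmodule) * B.toSubmodule, ∀ f0 : F,
        c • jF f0 ∈ ⨆ i, W i := by
      intro c hc
      refine Submodule.mul_induction_on hc (fun m hm n hn => ?_)
        (fun x y hx hy f0 => by rw [add_smul]; exact Submodule.add_mem _ (hx f0) (hy f0))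
      intro f0
      rw [mul_smul, ← hjF ⟨n, hBle hn⟩ f0]
      exact hBbH_W m hm _
    intro c f0
    exact key c (by rw [hABtop]; trivial) f0
  have hDF_top : ∀ y : DF, y ∈ ⨆ i, W i := by
    have hstab : ∀ y ∈ (⨆ i, W i : Submodule k DF), ∀ a : A, a • y ∈ (⨆ i, W i : Submodule k DF) := by
      intro y hy
      refine Submodule.iSup_induction (motive := fun y => ∀ a : A, a • y ∈ (⨆ i, W i : Submodule k DF))
        _ hy ?_ (fun a => by rw [smul_zero]; exact zero_mem _)
        (fun u v hu hv a => by rw [smul_add]; exact Submodule.add_mem _ (hu a) (hv a))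
      intro i x hxW
      refine Submodule.span_induction ?_ (fun a => by rw [smul_zero]; exact zero_mem _)
        (fun u v _ _ hu hv a => by rw [smul_add]; exact Submodule.add_mem _ (hu a) (hv a))
        ?_ hxW
      · rintro x ⟨a0, ha0, f0, rfl⟩ a
        rw [← mul_smul]
        exact hW_A _ f0
      · intro c u _ hu a
        rw [hsmulDF, aux_centr, ← hsmulDF]
        exact Submodule.smul_mem _ c (hu a)
    let WA : Submodule A DF :=
      { carrier := (⨆ i, W i : Submodule k DF)
        add_mem' := fun ha hb => Submodule.add_mem _ ha hb
        zero_mem' := Submodule.zero_mem _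
        smul_mem' := fun a y hy => hstab y hy a }
    have hcompatq : ∀ (s : ↥SBH) (f0 : F),
        (WA.mkQ.toAddMonoidHom.comp jF) (π s • f0) = (s : A) • (WA.mkQ.toAddMonoidHom.comp jF) f0 := by
      intro s f0
      show WA.mkQ (jF (π s • f0)) = (s : A) • WA.mkQ (jF f0)
      rw [hjF, map_smul]
    obtain ⟨G, hG, huniq⟩ := hDFuniv (ModuleCat.of A (DF ⧸ WA)) (WA.mkQ.toAddMonoidHom.comp jF)
      hcompatq
    have h1 : WA.mkQ = G := huniq WA.mkQ (fun f0 => rfl)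
    have h2 : (0 : DF →ₗ[A] DF ⧸ WA) = G := by
      refine huniq 0 (fun f0 => ?_)
      show (0 : DF ⧸ WA) = WA.mkQ (jF f0)
      rw [eq_comm, Submodule.mkQ_apply, Submodule.Quotient.mk_eq_zero]
      show jF f0 ∈ (⨆ i, W i : Submodule k DF)
      have := hW_A 1 f0
      rwa [one_smul] at this
    intro y
    have h3 : WA.mkQ y = 0 := by rw [h1, ← h2]; rfl
    rw [Submodule.mkQ_apply, Submodule.Quotient.mk_eq_zero] at h3
    exact h3
  have hE1 : ∀ μ : k, (∀ i : ℕ, μ ≠ lamF i) → ∀ u : DF,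
      auxS dd μ (auxS dd μ u) = 0 → u = 0 := by
    intro μ hμ u hu
    have h1 : u ∈ ⨆ i, LinearMap.ker (TF - lamF i • (1 : Module.End k DF)) :=
      (iSup_mono hW_le) (hDF_top u)
    obtain ⟨s, hs⟩ := Submodule.mem_iSup_iff_exists_finset.mp h1
    refine aux_eig TF lamF μ hμ s u hs ?_
    have hop : ∀ v : DF, (TF - μ • (1 : Module.End k DF)) v = auxS dd μ v := by
      intro v
      show TF v - μ • v = auxS dd μ v
      rw [hsmulDF]
      rfl
    rw [hop, hop, hu]
  -- ### Stage 3 : the key vanishing lemma on X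
  have hLBj : ∀ (x : X) (e : E), g x = jE e → auxS dd (-cE) (auxS dd (-cE) x) = 0 →
      ∀ (j : ℤ), j < 0 → ∀ b ∈ B, b ∈ 𝒜 j → b • x = 0 := by
    intro x e hgx hS2 j hj b hbB hbj
    have hconj : ∀ y : X, auxS dd (-cE + ((j : ℤ) : k)) (b • y) = b • auxS dd (-cE) y :=
      fun y => aux_conj2 𝒜 dd hinner hbj (-cE) y
    have h1 : auxS dd (-cE + ((j : ℤ) : k)) (auxS dd (-cE + ((j : ℤ) : k)) (b • x)) = 0 := by
      rw [hconj x, hconj _, hS2, smul_zero]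
    have hgz : g (b • x) = 0 := by
      rw [map_smul, hgx]
      have hπb : π ⟨b, hBle hbB⟩ = 0 :=
        hπB b hbB (DirectSum.decompose_of_mem_ne 𝒜 hbj (by omega))
      have h2 := hjE ⟨b, hBle hbB⟩ e
      rw [hπb, zero_smul, map_zero] at h2
      exact h2.symm
    obtain ⟨u, hu⟩ : ∃ u, f u = b • x := by
      have hker : b • x ∈ LinearMap.ker g := hgz
      rw [← hfg] at hker
      exact hker
    have hu2 : auxS dd (-cE + ((j : ℤ) : k)) (auxS dd (-cE + ((j : ℤ) : k)) u) = 0 := by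
      apply hf
      rw [aux_map_auxS f, aux_map_auxS f, hu, h1, map_zero]
    have hμ' : ∀ i : ℕ, (-cE + ((j : ℤ) : k)) ≠ lamF i := by
      intro i hEqq
      have hEqq' : -cE + ((j : ℤ) : k) = (i : k) - cF := hEqq
      have habs : ((j.natAbs : ℤ)) = -j := by omega
      have hn : cF - cE = ((i + j.natAbs : ℕ) : k) := by
        have hstep : ((i + j.natAbs : ℕ) : k) = (i : k) + (((j.natAbs : ℤ)) : k) := by
          rw [Int.cast_natCast]
          push_cast
          ring
        rw [hstep, habs]
        push_cast
        linear_combination hEqq'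
      exact hmain (i + j.natAbs) (by omega) hn
    have hu0 : u = 0 := hE1 _ hμ' u hu2
    rw [← hu, hu0, map_zero]
  -- ### Stage 4 : the kernel of jE is trivial or everything
  let kerJE : Submodule ↥H E :=
    { carrier := {e | jE e = 0}
      zero_mem' := map_zero jE
      add_mem' := fun {a b} ha hb => by
        have ha' : jE a = 0 := ha
        have hb' : jE b = 0 := hb
        show jE (a + b) = 0
        rw [map_add, ha', hb', add_zero]
      smul_mem' := fun η e he => by
        have he' : jE e = 0 := he
        show jE (η • e) = 0
        have hη : π ⟨(η : A), hHle η.2⟩ = η := Subtype.ext (hπH _ η.2)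
        have h1 := hjE ⟨(η : A), hHle η.2⟩ e
        rw [hη] at h1
        rw [h1, he', smul_zero] }
  rcases eq_bot_or_eq_top kerJE with hbot | htop
  swap
  · -- jE = 0 : then DE is trivial and the zero map splits
    have hjE0 : ∀ e : E, jE e = 0 := by
      intro e
      have : e ∈ kerJE := by rw [htop]; trivial
      exact this
    obtain ⟨Gid, hGid, huniqid⟩ := hDEuniv (ModuleCat.of A DE) jE hjE
    have h1 : (LinearMap.id : DE →ₗ[A] DE) = Gid := huniqid LinearMap.id (fun e => rfl)
    have h2 : (0 : DE →ₗ[A] DE) = Gid := huniqid 0 (fun e => by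
      show (0 : DE) = jE e
      rw [hjE0 e])
    refine ⟨0, ?_⟩
    ext y
    have hy : y = 0 := by
      have := LinearMap.congr_fun (h1.trans h2.symm) y
      simpa using this
    show g 0 = y
    rw [map_zero, hy]
  have hjEinj : Function.Injective jE := by
    intro e e' hee
    have hmem : e - e' ∈ kerJE := by
      show jE (e - e') = 0
      rw [map_sub, hee, sub_self]
    rw [hbot] at hmem
    have : e - e' = 0 := hmem
    rwa [sub_eq_zero] at this
  -- ### Stage 5 : the lowest-weight submodule K of X
  letI instHX : Module ↥H X := Module.compHom X (Subalgebra.val H).toRingHom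
  have hsmulHX : ∀ (η : ↥H) (x : X), η • x = (η : A) • x := fun _ _ => rfl
  have hddH : ∀ η : ↥H, dd * (η : A) = (η : A) * dd := by
    intro η
    have h0 := hinner 0 (η : A) (hH0 η.2)
    rw [zero_smul, sub_eq_zero] at h0
    exact h0
  let K : Submodule ↥H X :=
    { carrier := {x | auxS dd (-cE) x = 0 ∧ ∃ e, g x = jE e}
      zero_mem' := ⟨auxS_zero dd _, 0, by rw [map_zero, map_zero]⟩
      add_mem' := fun {a b} ha hb => by
        obtain ⟨ha1, ea, hea⟩ := ha
        obtain ⟨hb1, eb, heb⟩ := hb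
        exact ⟨by rw [auxS_add, ha1, hb1, add_zero], ea + eb,
          by rw [map_add, map_add, hea, heb]⟩
      smul_mem' := fun η x hx => by
        obtain ⟨hx1, e, he⟩ := hx
        constructor
        · show auxS dd (-cE) ((η : A) • x) = 0
          rw [aux_auxS_comm dd (η : A) (hddH η), hx1, smul_zero]
        · refine ⟨η • e, ?_⟩
          show g ((η : A) • x) = jE (η • e)
          have hη : π ⟨(η : A), hHle η.2⟩ = η := Subtype.ext (hπH _ η.2)
          have h1 := hjE ⟨(η : A), hHle η.2⟩ e
          rw [hη] at h1
          rw [map_smul, he, h1] }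
  have hKmem : ∀ x : ↥K, auxS dd (-cE) (x : X) = 0 ∧ ∃ e, g (x : X) = jE e := fun x => x.2
  let ε : ↥K → E := fun x => (hKmem x).2.choose
  have hφspec : ∀ x : ↥K, g (x : X) = jE (ε x) := fun x => (hKmem x).2.choose_spec
  let φ : ↥K →ₗ[↥H] E :=
    { toFun := ε
      map_add' := fun x y => by
        apply hjEinj
        rw [map_add, ← hφspec, ← hφspec, ← hφspec, Submodule.coe_add, map_add]
      map_smul' := fun η x => by
        apply hjEinj
        have hη : π ⟨(η : A), hHle η.2⟩ = η := Subtype.ext (hπH _ η.2)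
        have h1 := hjE ⟨(η : A), hHle η.2⟩ (ε x)
        rw [hη] at h1
        show jE (ε (η • x)) = jE (η • ε x)
        rw [← hφspec, h1, ← hφspec]
        show g ((η : A) • (x : X)) = (η : A) • g (x : X)
        rw [map_smul] }
  -- ### Stage 6 : surjectivity of φ
  have hsurjφ : Function.Surjective φ := by
    intro e
    obtain ⟨x₀, hx₀⟩ := hg (jE e)
    have hgS : g (auxS dd (-cE) x₀) = 0 := by
      rw [aux_map_auxS g, hx₀]
      show dd • jE e - algebraMap k A (-cE) • jE e = 0
      rw [hlowE, sub_self]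
    obtain ⟨w, hw⟩ : ∃ w, f w = auxS dd (-cE) x₀ := by
      have hker : auxS dd (-cE) x₀ ∈ LinearMap.ker g := hgS
      rw [← hfg] at hker
      exact hker
    have hfix : ∀ w' ∈ (⨆ i, W i : Submodule k DF), ∃ v w₀ : DF,
        w' = auxS dd (-cE) v + w₀ ∧ auxS dd (-cE) w₀ = 0 := by
      intro w' hw'
      refine Submodule.iSup_induction (motive := fun w' => ∃ v w₀ : DF,
        w' = auxS dd (-cE) v + w₀ ∧ auxS dd (-cE) w₀ = 0) _ hw' ?_
        ⟨0, 0, by rw [auxS_zero, add_zero], auxS_zero dd _⟩ ?_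
      · intro i x hxW
        have hx_e : auxS dd (lamF i) x = 0 := (hEig_iff i x).mp (hW_le i hxW)
        have hgam : auxS dd (-cE) x = (lamF i + cE) • x := by
          have hsplit : auxS dd (-cE) x
              = auxS dd (lamF i) x + (algebraMap k A (lamF i) - algebraMap k A (-cE)) • x := by
            simp only [auxS, sub_smul]
            abel
          rw [hsplit, hx_e, zero_add, ← map_sub, hsmulDF]
          congr 1
          ring
        by_cases hγ : lamF i + cE = 0
        · exact ⟨0, x, by rw [auxS_zero, zero_add], by rw [hgam, hγ, zero_smul]⟩
        · refine ⟨(lamF i + cE)⁻¹ • x, 0, ?_, auxS_zero dd _⟩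
          rw [add_zero]
          have hklin : auxS dd (-cE) ((lamF i + cE)⁻¹ • x)
              = (lamF i + cE)⁻¹ • auxS dd (-cE) x := by
            rw [hsmulDF, aux_auxS_comm dd _ (Algebra.commutes _ dd).symm, ← hsmulDF]
          rw [hklin, hgam, smul_smul, inv_mul_cancel₀ hγ, one_smul]
      · rintro x y ⟨v, w₀, hx1, hx2⟩ ⟨v', w₀', hy1, hy2⟩
        exact ⟨v + v', w₀ + w₀', by rw [auxS_add, hx1, hy1]; abel,
          by rw [auxS_add, hx2, hy2, add_zero]⟩
    obtain ⟨v, w₀, hvw, hw₀⟩ := hfix w (hDF_top w)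
    have hfvker : g (f v) = 0 := by
      have : f v ∈ LinearMap.ker g := by
        rw [← hfg]
        exact ⟨v, rfl⟩
      exact this
    have hgx' : g (x₀ - f v) = jE e := by rw [map_sub, hx₀, hfvker, sub_zero]
    have hSx' : auxS dd (-cE) (x₀ - f v) = f w₀ := by
      have hsub : auxS dd (-cE) (x₀ - f v) = auxS dd (-cE) x₀ - auxS dd (-cE) (f v) := by
        simp only [auxS, smul_sub]
        abel
      rw [hsub, ← hw, ← aux_map_auxS f, ← map_sub]
      congr 1
      rw [hvw]
      abel
    have hS2x' : auxS dd (-cE) (auxS dd (-cE) (x₀ - f v)) = 0 := by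
      rw [hSx', ← aux_map_auxS f, hw₀, map_zero]
    -- kill the strictly-positive part of ∂
    have hdd'x' : dd' • (x₀ - f v) = 0 := by
      refine Submodule.mul_induction_on hdd' (fun m hm n hn => ?_)
        (fun a b ha hb => by rw [add_smul, ha, hb, add_zero])
      have hn0 : n • (x₀ - f v) = 0 := by
        have hdec := DirectSum.sum_support_decompose 𝒜 n
        rw [← hdec, Finset.sum_smul]
        refine Finset.sum_eq_zero fun j hj => ?_
        by_cases hjneg : j < 0
        · exact hLBj (x₀ - f v) e hgx' hS2x' j hjneg _ (hBgraded n hn.1 j) (SetLike.coe_mem _)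
        · rw [hcompNN n hn.2 j (by omega), zero_smul]
      rw [mul_smul, hn0, smul_zero]
    have hSlin : auxS dd (-cE) (x₀ - f v) = (algebraMap k A cE - dd0) • (x₀ - f v) := by
      show dd • (x₀ - f v) - algebraMap k A (-cE) • (x₀ - f v) = _
      rw [hddsplit, sub_smul, hdd'x', zero_sub, map_neg, neg_smul, sub_neg_eq_add, sub_smul]
      abel
    set nA : A := algebraMap k A cE - dd0 with hnAdef
    set nH : ↥H := algebraMap k ↥H cE - ⟨dd0, hdd0H⟩ with hnHdef
    have hnHA : ((nH : ↥H) : A) = nA := by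
      rw [hnHdef, hnAdef]
      push_cast
      norm_num
    have hnHcentral : ∀ m : ↥H, nH * m = m * nH := by
      intro m
      apply Subtype.ext
      show ((nH * m : ↥H) : A) = ((m * nH : ↥H) : A)
      push_cast
      rw [hnHA, sub_mul, mul_sub, hdd0central m.1 m.2, Algebra.commutes cE (m : A)]
    obtain ⟨bH, hbH⟩ := aux_vonNeumann_central nH hnHcentral
    have hcomm_n : dd * nA = nA * dd := by
      have h1 : dd * dd0 = dd0 * dd := by
        have h0 := hinner 0 dd0 (hH0 hdd0H)
        rw [zero_smul, sub_eq_zero] at h0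
        exact h0
      rw [hnAdef, mul_sub, sub_mul, h1, ← Algebra.commutes cE dd]
    have hn2 : (nA * nA) • (x₀ - f v) = 0 := by
      rw [mul_smul, ← hSlin, ← aux_auxS_comm dd nA hcomm_n, ← hSlin]
      exact hS2x'
    have hSx'0 : auxS dd (-cE) (x₀ - f v) = 0 := by
      rw [hSlin]
      have hbA : nA = (bH : A) * (nA * nA) := by
        have h1 : ((nH : ↥H) : A) = ((bH * (nH * nH) : ↥H) : A) := by rw [← hbH]
        push_cast at h1
        rw [hnHA] at h1
        exact h1
      rw [hbA, mul_smul, hn2, smul_zero]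
    refine ⟨⟨x₀ - f v, hSx'0, e, hgx'⟩, ?_⟩
    apply hjEinj
    show jE (ε ⟨x₀ - f v, hSx'0, e, hgx'⟩) = jE e
    rw [← hφspec ⟨x₀ - f v, hSx'0, e, hgx'⟩]
    exact hgx'
  -- ### Stage 7 : splitting off a copy of E inside K
  obtain ⟨C, hC⟩ := exists_isCompl (LinearMap.ker φ)
  let φC : ↥C →ₗ[↥H] E := φ ∘ₗ C.subtype
  have hinjC : Function.Injective φC := by
    intro x y hxy
    have hmemC : (x : ↥K) - (y : ↥K) ∈ C := sub_mem x.2 y.2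
    have hker : (x : ↥K) - (y : ↥K) ∈ LinearMap.ker φ := by
      rw [LinearMap.mem_ker, map_sub]
      have : φ (x : ↥K) = φ (y : ↥K) := hxy
      rw [this, sub_self]
    have hmem2 : (x : ↥K) - (y : ↥K) ∈ LinearMap.ker φ ⊓ C := ⟨hker, hmemC⟩
    rw [hC.inf_eq_bot] at hmem2
    have : (x : ↥K) - (y : ↥K) = 0 := hmem2
    exact Subtype.ext (by rwa [sub_eq_zero] at this)
  have hsurjC : Function.Surjective φC := by
    intro e
    obtain ⟨x, hx⟩ := hsurjφ e
    have hxmem : x ∈ LinearMap.ker φ ⊔ C := by rw [hC.sup_eq_top]; trivial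
    obtain ⟨y, hy, z, hz, hyz⟩ := Submodule.mem_sup.mp hxmem
    refine ⟨⟨z, hz⟩, ?_⟩
    show φ z = e
    rw [← hx, ← hyz, map_add, LinearMap.mem_ker.mp hy, zero_add]
  let ψE := (LinearEquiv.ofBijective φC ⟨hinjC, hsurjC⟩).symm
  let h : E → X := fun e => (((ψE e : ↥C) : ↥K) : X)
  have hφψ : ∀ e, φC (ψE e) = e := fun e =>
    (LinearEquiv.ofBijective φC ⟨hinjC, hsurjC⟩).apply_symm_apply e
  have hge : ∀ e, g (h e) = jE e := by
    intro e
    have h1 : g (h e) = jE (φ ((ψE e : ↥C) : ↥K)) := hφspec _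
    rw [h1]
    congr 1
    exact hφψ e
  have hS0 : ∀ e, auxS dd (-cE) (h e) = 0 := fun e => (hKmem ((ψE e : ↥C) : ↥K)).1
  have hadd : ∀ e e', h (e + e') = h e + h e' := by
    intro e e'
    show (((ψE (e + e') : ↥C) : ↥K) : X) = _
    rw [map_add]
    rfl
  have hsmulH : ∀ (η : ↥H) (e : E), h (η • e) = (η : A) • h e := by
    intro η e
    show (((ψE (η • e) : ↥C) : ↥K) : X) = _
    rw [map_smul]
    rfl
  have hsmulk : ∀ (c : k) (e : E), h (c • e) = algebraMap k A c • h e := by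
    intro c e
    rw [← algebraMap_smul (↥H) c e, hsmulH, Subalgebra.coe_algebraMap]
  -- ### Stage 8 : compatibility of h with the BH-action
  have hBstep : ∀ (b : A) (hb : b ∈ B) (e : E), h (π ⟨b, hBle hb⟩ • e) = b • h e := by
    intro b hb e
    have hb0mem : ((DirectSum.decompose 𝒜 b) 0 : A) ∈ B.toSubmodule ⊓ 𝒜 0 :=
      ⟨hBgraded b hb 0, SetLike.coe_mem _⟩
    rw [hB0] at hb0mem
    obtain ⟨c, hc⟩ := Submodule.mem_span_singleton.mp hb0mem
    have hb'B : b - c • (1 : A) ∈ B := sub_mem hb (SMulMemClass.smul_mem c (one_mem B))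
    have hsum : c • (1 : A) + (b - c • (1 : A)) = b := by rw [add_comm, sub_add_cancel]
    have hb'0 : ((DirectSum.decompose 𝒜 (b - c • (1 : A))) 0 : A) = 0 := by
      have h1 : (DirectSum.decompose 𝒜 b) 0
          = (DirectSum.decompose 𝒜 (c • (1 : A))) 0
            + (DirectSum.decompose 𝒜 (b - c • (1 : A))) 0 := by
        conv_lhs => rw [← hsum]
        rw [DirectSum.decompose_add, DirectSum.add_apply]
      have h2 : ((DirectSum.decompose 𝒜 (c • (1 : A))) 0 : A) = c • (1 : A) :=
        DirectSum.decompose_of_mem_same 𝒜 (Submodule.smul_mem _ c (SetLike.one_mem_graded 𝒜))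
      have h3 := congrArg (fun t => ((t : 𝒜 0) : A)) h1
      simp only [Submodule.coe_add] at h3
      rw [h2, ← hc] at h3
      exact (left_eq_add.mp h3)
    have hπb : π ⟨b, hBle hb⟩ = c • (1 : ↥H) := by
      have hsplit : (⟨b, hBle hb⟩ : ↥SBH)
          = c • (1 : ↥SBH) + ⟨b - c • (1 : A), hBle hb'B⟩ := by
        apply Subtype.ext
        show b = c • (1 : A) + (b - c • (1 : A))
        rw [hsum]
      rw [hsplit, map_add, map_smul, map_one, hπB _ hb'B hb'0, add_zero]
    rw [hπb]
    have hsm : (c • (1 : ↥H)) • e = c • e := by rw [smul_assoc, one_smul]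
    rw [hsm, hsmulk]
    have hb'kill : (b - c • (1 : A)) • h e = 0 := by
      have hS2 : auxS dd (-cE) (auxS dd (-cE) (h e)) = 0 := by rw [hS0, auxS_zero]
      have hdec := DirectSum.sum_support_decompose 𝒜 (b - c • (1 : A))
      rw [← hdec, Finset.sum_smul]
      refine Finset.sum_eq_zero fun j hj => ?_
      rcases lt_trichotomy j 0 with hneg | h0 | hpos
      · exact hLBj (h e) e (hge e) hS2 j hneg _ (hBgraded _ hb'B j) (SetLike.coe_mem _)
      · rw [h0, hb'0, zero_smul]
      · rw [hBneg _ hb'B j hpos, zero_smul]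
    conv_rhs => rw [← hsum]
    rw [add_smul, hb'kill, add_zero, ← Algebra.algebraMap_eq_smul_one]
  have hmemBH : ∀ x : A, x ∈ SBH → x ∈ B.toSubmodule * H.toSubmodule := by
    intro x hx
    rw [← hSBH]
    exact hx
  have hcompat : ∀ (x : A) (hx : x ∈ SBH), ∀ e : E, h (π ⟨x, hx⟩ • e) = x • h e := by
    intro x hx
    refine Submodule.mul_induction_on' (C := fun x _ => ∀ (hx : x ∈ SBH) (e : E),
        h (π ⟨x, hx⟩ • e) = x • h e) ?_ ?_ (hmemBH x hx) hx
    · intro b hbB η hηH hx e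
      have hfact : (⟨b * η, hx⟩ : ↥SBH) = ⟨b, hBle hbB⟩ * ⟨η, hHle hηH⟩ := rfl
      rw [hfact, map_mul, mul_smul]
      have hπη : π ⟨η, hHle hηH⟩ = ⟨η, hηH⟩ := Subtype.ext (hπH η hηH)
      rw [hπη, hBstep b hbB, hsmulH ⟨η, hηH⟩ e, ← mul_smul]
    · intro x hxm y hym hx hy hxy e
      have hxS : x ∈ SBH := by rw [← Subalgebra.mem_toSubmodule, hSBH]; exact hxm
      have hyS : y ∈ SBH := by rw [← Subalgebra.mem_toSubmodule, hSBH]; exact hym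
      have hfact : (⟨x + y, hxy⟩ : ↥SBH) = ⟨x, hxS⟩ + ⟨y, hyS⟩ := rfl
      rw [hfact, map_add, add_smul, add_smul]
      have hha : h (π ⟨x, hxS⟩ • e + π ⟨y, hyS⟩ • e)
          = h (π ⟨x, hxS⟩ • e) + h (π ⟨y, hyS⟩ • e) := hadd _ _
      rw [hha, hx hxS e, hy hyS e]
  -- ### Stage 9 : conclusion via the universal property of Δ(E)
  let hAM : E →+ X :=
    { toFun := h
      map_zero' := by
        show (((ψE (0 : E) : ↥C) : ↥K) : X) = 0
        rw [map_zero]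
        rfl
      map_add' := hadd }
  obtain ⟨G, hG, _⟩ := hDEuniv (ModuleCat.of A X) hAM (fun s e => hcompat s.1 s.2 e)
  obtain ⟨Gid, hGid, huniqid⟩ := hDEuniv (ModuleCat.of A DE) jE hjE
  have h1 : (g ∘ₗ G : DE →ₗ[A] DE) = Gid := huniqid (g ∘ₗ G) (fun e => by
    show g (G (jE e)) = jE e
    rw [hG e]
    exact hge e)
  have h2 : (LinearMap.id : DE →ₗ[A] DE) = Gid := huniqid LinearMap.id (fun e => rfl)
  exact ⟨G, h1.trans h2.symm⟩
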